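/- Let n ≥ 4. In ℚ[e₁,…,e_n], with W(ω₁)={±e_i}, W(ω₂)={±e_i±e_j: i<j}, W(ω₃)={±e_i±e_j±e_k: i<j<k} (all sign combinations), one has ∑_{λ∈W(ω₃)} λ⁶ − 2(n−2)∑_{λ∈W(ω₂)} λ⁶ + 2(n−1)(n−2)∑_{λ∈W(ω₁)} λ⁶ = 6!·∑_{i<j<k} e_i² e_j² e_k². -/
import Mathlib

section Aux

variable {R : Type*} [CommRing R]

lemma aux_signs3 (x y z : R) :
    ∑ a ∈ ({-1, 1} : Finset ℤ), ∑ b ∈ ({-1, 1} : Finset ℤ), ∑ c ∈ ({-1, 1} : Finset ℤ),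
      (a • x + b • y + c • z) ^ 6
    = 8 * (x^6 + y^6 + z^6)
      + 120 * (x^4*y^2 + x^2*y^4 + x^4*z^2 + x^2*z^4 + y^4*z^2 + y^2*z^4)
      + 720 * (x^2*y^2*z^2) := by
  simp only [Finset.sum_insert (by decide : (-1:ℤ) ∉ ({1} : Finset ℤ)),
    Finset.sum_singleton, neg_smul, one_smul]
  ring

lemma aux_signs2 (x y : R) :
    ∑ a ∈ ({-1, 1} : Finset ℤ), ∑ b ∈ ({-1, 1} : Finset ℤ), (a • x + b • y) ^ 6
    = 4 * (x^6 + y^6) + 60 * (x^4*y^2 + x^2*y^4) := by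
  simp only [Finset.sum_insert (by decide : (-1:ℤ) ∉ ({1} : Finset ℤ)),
    Finset.sum_singleton, neg_smul, one_smul]
  ring

lemma aux_signs1 (x : R) :
    ∑ a ∈ ({-1, 1} : Finset ℤ), (a • x) ^ 6 = 2 * x^6 := by
  simp only [Finset.sum_insert (by decide : (-1:ℤ) ∉ ({1} : Finset ℤ)),
    Finset.sum_singleton, neg_smul, one_smul]
  ring

end Aux

section AuxSum

variable {R : Type*} [AddCommMonoid R]

lemma aux_pair_sum {n : ℕ} (f : Fin n → R) :
    ∑ p ∈ Finset.univ.filter (fun p : Fin n × Fin n => p.1 < p.2), (f p.1 + f p.2)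
      = (n - 1) • ∑ i, f i := by
  rw [Finset.sum_filter, Fintype.sum_prod_type]
  have h1 : ∀ i j : Fin n,
      (if i < j then f i + f j else 0) = (if i < j then f i else 0) + (if i < j then f j else 0) := by
    intro i j; split <;> simp
  simp_rw [h1, Finset.sum_add_distrib]
  have h2 : ∑ i : Fin n, ∑ j : Fin n, (if i < j then f j else 0)
      = ∑ i : Fin n, ∑ j : Fin n, (if j < i then f i else 0) := by
    rw [Finset.sum_comm]
  rw [h2, ← Finset.sum_add_distrib]
  simp_rw [← Finset.sum_add_distrib]
  have h3 : ∀ i : Fin n, ∑ j : Fin n, ((if i < j then f i else 0) + (if j < i then f i else 0))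
      = (n-1) • f i := by
    intro i
    have key : ∀ j : Fin n, ((if i < j then f i else 0) + (if j < i then f i else 0))
        = (if j ∈ Finset.univ.erase i then f i else 0) := by
      intro j
      simp only [Finset.mem_erase, Finset.mem_univ, and_true]
      split_ifs <;> first | (exfalso; omega) | simp
    simp_rw [key]
    rw [Finset.sum_ite_mem, Finset.univ_inter, Finset.sum_const,
      Finset.card_erase_of_mem (Finset.mem_univ i), Finset.card_univ, Fintype.card_fin]
  rw [Finset.sum_congr rfl fun i _ => h3 i, ← Finset.smul_sum]

lemma aux_triple_sum {n : ℕ} (h : Fin n → Fin n → R) :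
    ∑ t ∈ Finset.univ.filter
        (fun t : Fin n × Fin n × Fin n => t.1 < t.2.1 ∧ t.2.1 < t.2.2),
      (h t.1 t.2.1 + h t.1 t.2.2 + h t.2.1 t.2.2)
    = (n - 2) • ∑ p ∈ Finset.univ.filter (fun p : Fin n × Fin n => p.1 < p.2), h p.1 p.2 := by
  rw [Finset.sum_filter]
  rw [Fintype.sum_prod_type]
  simp_rw [Fintype.sum_prod_type]
  have hsplit : ∀ i j k : Fin n,
      (if i < j ∧ j < k then h i j + h i k + h j k else 0)
      = (if i < j ∧ j < k then h i j else 0) + (if i < j ∧ j < k then h i k else 0)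
        + (if i < j ∧ j < k then h j k else 0) := by
    intro i j k; split <;> simp
  simp_rw [hsplit, Finset.sum_add_distrib]
  have hB : ∀ i : Fin n, (∑ j : Fin n, ∑ k : Fin n, if i < j ∧ j < k then h i k else 0)
      = ∑ j : Fin n, ∑ k : Fin n, if i < k ∧ k < j then h i j else 0 :=
    fun i => Finset.sum_comm
  have hC : (∑ i : Fin n, ∑ j : Fin n, ∑ k : Fin n, if i < j ∧ j < k then h j k else 0)
      = ∑ i : Fin n, ∑ j : Fin n, ∑ k : Fin n, if k < i ∧ i < j then h i j else 0 := by
    rw [Finset.sum_comm]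
    refine Finset.sum_congr rfl fun j _ => ?_
    exact Finset.sum_comm
  simp_rw [hB]
  rw [hC]
  rw [← Finset.sum_add_distrib]
  simp_rw [← Finset.sum_add_distrib]
  have key : ∀ a b k : Fin n,
      ((if a < b ∧ b < k then h a b else 0) + (if a < k ∧ k < b then h a b else 0)
        + (if k < a ∧ a < b then h a b else 0))
      = (if a < b then (if k ∈ Finset.univ \ {a, b} then h a b else 0) else 0) := by
    intro a b k
    simp only [Finset.mem_sdiff, Finset.mem_univ, Finset.mem_insert, Finset.mem_singleton,
      true_and]
    split_ifs <;> first | (exfalso; omega) | simp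
  simp_rw [key]
  have hcount : ∀ a b : Fin n,
      (∑ k : Fin n, if a < b then (if k ∈ Finset.univ \ {a, b} then h a b else 0) else 0)
      = (if a < b then (n - 2) • h a b else 0) := by
    intro a b
    split_ifs with hab
    · rw [Finset.sum_ite_mem, Finset.univ_inter, Finset.sum_const]
      congr 1
      rw [Finset.card_sdiff_of_subset (Finset.subset_univ _), Finset.card_univ, Fintype.card_fin,
        Finset.card_insert_of_notMem (by simp [hab.ne]), Finset.card_singleton]
    · simp
  simp_rw [hcount]
  rw [Finset.smul_sum, Finset.sum_filter, Fintype.sum_prod_type]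

end AuxSum

open MvPolynomial in
theorem stmt_13 (n : ℕ) (hn : 4 ≤ n) :
    (∑ t ∈ Finset.univ.filter
          (fun t : Fin n × Fin n × Fin n => t.1 < t.2.1 ∧ t.2.1 < t.2.2),
        ∑ a ∈ ({-1, 1} : Finset ℤ), ∑ b ∈ ({-1, 1} : Finset ℤ),
          ∑ c ∈ ({-1, 1} : Finset ℤ),
            (a • X t.1 + b • X t.2.1 + c • X t.2.2 : MvPolynomial (Fin n) ℚ) ^ 6)
      - 2 * ((n : MvPolynomial (Fin n) ℚ) - 2) *
        (∑ q ∈ Finset.univ.filter (fun q : Fin n × Fin n => q.1 < q.2),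
          ∑ a ∈ ({-1, 1} : Finset ℤ), ∑ b ∈ ({-1, 1} : Finset ℤ),
            (a • X q.1 + b • X q.2 : MvPolynomial (Fin n) ℚ) ^ 6)
      + 2 * ((n : MvPolynomial (Fin n) ℚ) - 1) * ((n : MvPolynomial (Fin n) ℚ) - 2) *
        (∑ i, ∑ a ∈ ({-1, 1} : Finset ℤ), (a • X i : MvPolynomial (Fin n) ℚ) ^ 6)
    = (Nat.factorial 6 : MvPolynomial (Fin n) ℚ) *
        ∑ t ∈ Finset.univ.filter
            (fun t : Fin n × Fin n × Fin n => t.1 < t.2.1 ∧ t.2.1 < t.2.2),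
          X t.1 ^ 2 * X t.2.1 ^ 2 * X t.2.2 ^ 2 := by
  classical
  set K := MvPolynomial (Fin n) ℚ
  simp_rw [aux_signs3, aux_signs2, aux_signs1]
  have hc2 : ((n - 2 : ℕ) : K) = (n : K) - 2 := by
    rw [Nat.cast_sub (by omega)]; norm_num
  have hc1 : ((n - 1 : ℕ) : K) = (n : K) - 1 := by
    rw [Nat.cast_sub (by omega)]; norm_num
  have f1 := aux_triple_sum (n := n) (R := K) (fun i j => X i ^ 6 + X j ^ 6)
  have f2 := aux_triple_sum (n := n) (R := K)
    (fun i j => X i ^ 4 * X j ^ 2 + X i ^ 2 * X j ^ 4)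
  have f3 := aux_pair_sum (n := n) (R := K) (fun i => X i ^ 6)
  have hfac : (Nat.factorial 6 : K) = 720 := by norm_num [Nat.factorial]
  simp only [nsmul_eq_mul, hc2, hc1, Finset.sum_add_distrib, ← Finset.mul_sum, hfac]
    at f1 f2 f3 ⊢
  linear_combination 4 * f1 + 120 * f2 - 4 * ((n : K) - 2) * f3
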